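/- There exists a strictly increasing continuous bijection h : [0,1] → [0,1] such that h(x/(1+x)) = h(x)/2 and h(1−x) = 1 − h(x) for all x ∈ [0,1]; moreover any such h conjugates the Farey map to the tent map, i.e. h(Φ(x)) = T(h(x)) for all x ∈ [0,1], where Φ(x) = min(x/(1−x), (1−x)/x) and T(y) = min(2y, 2−2y). -/

import Mathlib

/-- The Farey map `Φ(x) = min(x/(1-x), (1-x)/x)`. -/
noncomputable def fareyMap (x : ℝ) : ℝ :=
  min (x / (1 - x)) ((1 - x) / x)

/-- The tent map `T(y) = min(2y, 2-2y)`. -/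
def tentMap (y : ℝ) : ℝ :=
  min (2 * y) (2 - 2 * y)

/-- `h` is a strictly increasing continuous bijection of `[0,1]` onto itself satisfying the
two functional equations `h(x/(1+x)) = h(x)/2` and `h(1-x) = 1-h(x)` of the Minkowski
question mark function. -/
def IsMinkowskiQuestionMark (h : ℝ → ℝ) : Prop :=
  StrictMonoOn h (Set.Icc 0 1) ∧
  ContinuousOn h (Set.Icc 0 1) ∧
  Set.BijOn h (Set.Icc 0 1) (Set.Icc 0 1) ∧
  (∀ x ∈ Set.Icc (0 : ℝ) 1, h (x / (1 + x)) = h x / 2) ∧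
  (∀ x ∈ Set.Icc (0 : ℝ) 1, h (1 - x) = 1 - h x)

namespace MQAux

open Set

/-- the unit interval as a type -/
abbrev XI := ↥(Set.Icc (0:ℝ) 1)

def pt0 : XI := ⟨0, by constructor <;> norm_num⟩
def pt1 : XI := ⟨1, by constructor <;> norm_num⟩

lemma mem_gL {x : ℝ} (hx : x ∈ Set.Icc (0:ℝ) 1) :
    min x 2⁻¹ / (1 - min x 2⁻¹) ∈ Set.Icc (0:ℝ) 1 := by
  have h0 : 0 ≤ min x 2⁻¹ := le_min hx.1 (by norm_num)
  have h1 : min x 2⁻¹ ≤ 2⁻¹ := min_le_right _ _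
  constructor
  · exact div_nonneg h0 (by linarith)
  · rw [div_le_one (by linarith)]; linarith

lemma mem_gR {x : ℝ} (hx : x ∈ Set.Icc (0:ℝ) 1) :
    (1 - max x 2⁻¹) / max x 2⁻¹ ∈ Set.Icc (0:ℝ) 1 := by
  have h0 : (2⁻¹:ℝ) ≤ max x 2⁻¹ := le_max_right _ _
  have h1 : max x 2⁻¹ ≤ 1 := max_le hx.2 (by norm_num)
  constructor
  · exact div_nonneg (by linarith) (by linarith)
  · rw [div_le_one (by linarith)]; linarith

noncomputable def gL : XI → XI := fun x => ⟨_, mem_gL x.2⟩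
noncomputable def gR : XI → XI := fun x => ⟨_, mem_gR x.2⟩

lemma continuous_gL : Continuous gL := by
  apply Continuous.subtype_mk
  apply Continuous.div
  · exact continuous_subtype_val.min continuous_const
  · exact continuous_const.sub (continuous_subtype_val.min continuous_const)
  · intro x
    have : min (x:ℝ) 2⁻¹ ≤ 2⁻¹ := min_le_right _ _
    intro h; rw [sub_eq_zero] at h; rw [← h] at this; norm_num at this

lemma continuous_gR : Continuous gR := by
  apply Continuous.subtype_mk
  apply Continuous.div
  · exact continuous_const.sub (continuous_subtype_val.max continuous_const)
  · exact continuous_subtype_val.max continuous_const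
  · intro x
    have : (2⁻¹:ℝ) ≤ max (x:ℝ) 2⁻¹ := le_max_right _ _
    intro h; rw [h] at this; norm_num at this

lemma gL_mono : Monotone gL := by
  intro a b hab
  have hab' : (a:ℝ) ≤ b := hab
  show (gL a : ℝ) ≤ (gL b : ℝ)
  show min (a:ℝ) 2⁻¹ / (1 - min (a:ℝ) 2⁻¹) ≤ min (b:ℝ) 2⁻¹ / (1 - min (b:ℝ) 2⁻¹)
  have h0a : 0 ≤ min (a:ℝ) 2⁻¹ := le_min a.2.1 (by norm_num)
  have h1a : min (a:ℝ) 2⁻¹ ≤ 2⁻¹ := min_le_right _ _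
  have h1b : min (b:ℝ) 2⁻¹ ≤ 2⁻¹ := min_le_right _ _
  have hm : min (a:ℝ) 2⁻¹ ≤ min (b:ℝ) 2⁻¹ := min_le_min hab' le_rfl
  rw [div_le_div_iff₀ (by linarith) (by linarith)]
  nlinarith

lemma gR_anti : Antitone gR := by
  intro a b hab
  have hab' : (a:ℝ) ≤ b := hab
  show (gR b : ℝ) ≤ (gR a : ℝ)
  show (1 - max (b:ℝ) 2⁻¹) / max (b:ℝ) 2⁻¹ ≤ (1 - max (a:ℝ) 2⁻¹) / max (a:ℝ) 2⁻¹
  have h0a : (2⁻¹:ℝ) ≤ max (a:ℝ) 2⁻¹ := le_max_right _ _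
  have h0b : (2⁻¹:ℝ) ≤ max (b:ℝ) 2⁻¹ := le_max_right _ _
  have hm : max (a:ℝ) 2⁻¹ ≤ max (b:ℝ) 2⁻¹ := max_le_max hab' le_rfl
  rw [div_le_div_iff₀ (by linarith) (by linarith)]
  nlinarith

/-- The set of monotone continuous functions fixing the endpoints. -/
def M : Set C(XI, ℝ) := {f | f pt0 = 0 ∧ f pt1 = 1 ∧ Monotone f}

lemma isClosed_M : IsClosed M := by
  have h1 : IsClosed {f : C(XI,ℝ) | f pt0 = 0} :=
    isClosed_eq (continuous_eval_const pt0) continuous_const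
  have h2 : IsClosed {f : C(XI,ℝ) | f pt1 = 1} :=
    isClosed_eq (continuous_eval_const pt1) continuous_const
  have h3 : IsClosed {f : C(XI,ℝ) | Monotone f} := by
    have he : {f : C(XI,ℝ) | Monotone f}
        = ⋂ (p : XI × XI) (_ : p.1 ≤ p.2), {f : C(XI,ℝ) | f p.1 ≤ f p.2} := by
      ext f
      simp only [Set.mem_setOf_eq, Set.mem_iInter]
      exact ⟨fun hm p hp => hm hp, fun hm a b hab => hm (a, b) hab⟩
    rw [he]
    exact isClosed_iInter fun p => isClosed_iInter fun hp =>
      isClosed_le (continuous_eval_const _) (continuous_eval_const _)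
  have : M = {f : C(XI,ℝ) | f pt0 = 0} ∩ ({f | f pt1 = 1} ∩ {f | Monotone f}) := by
    ext f; simp [M, Set.mem_setOf_eq, and_assoc]
  rw [this]
  exact h1.inter (h2.inter h3)

instance : CompleteSpace ↥M := isClosed_M.completeSpace_coe

instance : Nonempty ↥M :=
  ⟨⟨⟨fun x => (x:ℝ), continuous_subtype_val⟩, by simp [pt0], by simp [pt1],
    fun a b hab => hab⟩⟩

noncomputable def lamRaw (f : C(XI,ℝ)) : XI → ℝ :=
  fun x => if (x:ℝ) ≤ 2⁻¹ then f (gL x) / 2 else 1 - f (gR x) / 2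

lemma gL_half {x : XI} (hx : (x:ℝ) = 2⁻¹) : gL x = pt1 := by
  apply Subtype.ext
  show min (x:ℝ) 2⁻¹ / (1 - min (x:ℝ) 2⁻¹) = 1
  rw [hx]; norm_num

lemma gR_half {x : XI} (hx : (x:ℝ) = 2⁻¹) : gR x = pt1 := by
  apply Subtype.ext
  show (1 - max (x:ℝ) 2⁻¹) / max (x:ℝ) 2⁻¹ = 1
  rw [hx]; norm_num

lemma continuous_lamRaw (f : C(XI,ℝ)) (hf1 : f pt1 = 1) : Continuous (lamRaw f) := by
  apply Continuous.if_le
  · exact (f.continuous.comp continuous_gL).div_const 2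
  · exact continuous_const.sub ((f.continuous.comp continuous_gR).div_const 2)
  · exact continuous_subtype_val
  · exact continuous_const
  · intro x hx
    rw [gL_half hx, gR_half hx, hf1]; norm_num

lemma gL_pt0 : gL pt0 = pt0 := by
  apply Subtype.ext
  show min (0:ℝ) 2⁻¹ / (1 - min (0:ℝ) 2⁻¹) = 0
  norm_num

lemma gR_pt1 : gR pt1 = pt0 := by
  apply Subtype.ext
  show (1 - max (1:ℝ) 2⁻¹) / max (1:ℝ) 2⁻¹ = 0
  norm_num

lemma lamRaw_mem {f : C(XI,ℝ)} (hf : f ∈ M) (hc : Continuous (lamRaw f)) :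
    (⟨lamRaw f, hc⟩ : C(XI,ℝ)) ∈ M := by
  obtain ⟨hf0, hf1, hmono⟩ := hf
  have hval1 : ∀ x : XI, f x ≤ 1 := fun x => by
    have h := hmono (show x ≤ pt1 from Subtype.coe_le_coe.mp (by exact x.2.2))
    rw [hf1] at h; exact h
  have hval0 : ∀ x : XI, 0 ≤ f x := fun x => by
    have h := hmono (show pt0 ≤ x from Subtype.coe_le_coe.mp (by exact x.2.1))
    rw [hf0] at h; exact h
  refine ⟨?_, ?_, ?_⟩
  · show lamRaw f pt0 = 0
    have : (pt0 : ℝ) ≤ 2⁻¹ := by norm_num [pt0]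
    simp only [lamRaw, if_pos this, gL_pt0, hf0]; norm_num
  · show lamRaw f pt1 = 1
    have : ¬ ((pt1 : ℝ) ≤ 2⁻¹) := by norm_num [pt1]
    simp only [lamRaw, if_neg this, gR_pt1, hf0]; norm_num
  · intro a b hab
    show lamRaw f a ≤ lamRaw f b
    have hab' : (a:ℝ) ≤ b := hab
    simp only [lamRaw]
    rcases le_or_gt (a:ℝ) 2⁻¹ with ha | ha <;> rcases le_or_gt (b:ℝ) 2⁻¹ with hb | hb
    · rw [if_pos ha, if_pos hb]
      have := hmono (gL_mono hab)
      linarith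
    · rw [if_pos ha, if_neg (not_le.mpr hb)]
      have h1 := hval1 (gL a)
      have h2 := hval1 (gR b)
      linarith
    · linarith
    · rw [if_neg (not_le.mpr ha), if_neg (not_le.mpr hb)]
      have := hmono (gR_anti hab)
      linarith

noncomputable def lam (f : ↥M) : ↥M :=
  ⟨⟨lamRaw f.1, continuous_lamRaw f.1 f.2.2.1⟩, lamRaw_mem f.2 _⟩

lemma lam_contracting : ContractingWith 2⁻¹ lam := by
  constructor
  · rw [← NNReal.coe_lt_coe]; norm_num
  · apply LipschitzWith.of_dist_le_mul
    intro f g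
    rw [Subtype.dist_eq, Subtype.dist_eq]
    have hC : (0:ℝ) ≤ (2⁻¹ : NNReal) * dist f.1 g.1 := by positivity
    rw [ContinuousMap.dist_le hC]
    intro x
    show dist (lamRaw f.1 x) (lamRaw g.1 x) ≤ _
    have hcast : ((2⁻¹ : NNReal) : ℝ) = 2⁻¹ := by norm_num
    rw [hcast]
    simp only [lamRaw]
    rcases le_or_gt (x:ℝ) 2⁻¹ with hx | hx
    · rw [if_pos hx, if_pos hx, Real.dist_eq]
      have h1 : f.1 (gL x) / 2 - g.1 (gL x) / 2 = (f.1 (gL x) - g.1 (gL x)) / 2 := by ring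
      rw [h1, abs_div, abs_two]
      have h2 : |f.1 (gL x) - g.1 (gL x)| ≤ dist f.1 g.1 := by
        rw [← Real.dist_eq]; exact ContinuousMap.dist_apply_le_dist _
      linarith
    · rw [if_neg (not_le.mpr hx), if_neg (not_le.mpr hx), Real.dist_eq]
      have h1 : (1 - f.1 (gR x) / 2) - (1 - g.1 (gR x) / 2)
          = -((f.1 (gR x) - g.1 (gR x)) / 2) := by ring
      rw [h1, abs_neg, abs_div, abs_two]
      have h2 : |f.1 (gR x) - g.1 (gR x)| ≤ dist f.1 g.1 := by
        rw [← Real.dist_eq]; exact ContinuousMap.dist_apply_le_dist _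
      linarith

noncomputable def hfix : ↥M := ContractingWith.fixedPoint lam lam_contracting

noncomputable def F : C(XI,ℝ) := hfix.1

lemma F0 : F pt0 = 0 := hfix.2.1
lemma F1 : F pt1 = 1 := hfix.2.2.1
lemma Fmono : Monotone F := hfix.2.2.2

lemma F_eq (x : XI) : F x = if (x:ℝ) ≤ 2⁻¹ then F (gL x) / 2 else 1 - F (gR x) / 2 := by
  have h : lam hfix = hfix := lam_contracting.fixedPoint_isFixedPt
  have h2 : hfix.1 = (lam hfix).1 := by rw [h]
  show hfix.1 x = _
  rw [h2]
  rfl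


/-- The Minkowski question mark function, extended to `ℝ` by clamping. -/
noncomputable def qm : ℝ → ℝ := fun x =>
  F ⟨max 0 (min 1 x), ⟨le_max_left _ _, max_le zero_le_one (min_le_left _ _)⟩⟩

lemma qm_eq {x : ℝ} (hx : x ∈ Set.Icc (0:ℝ) 1) : qm x = F ⟨x, hx⟩ := by
  unfold qm
  congr 1
  apply Subtype.ext
  show max 0 (min 1 x) = x
  rw [min_eq_right hx.2, max_eq_right hx.1]

lemma qm_cont : Continuous qm := by
  apply F.continuous.comp
  exact (continuous_const.max (continuous_const.min continuous_id)).subtype_mk _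

lemma qm0 : qm 0 = 0 := by
  rw [qm_eq ⟨le_refl 0, zero_le_one⟩]; exact F0

lemma qm1 : qm 1 = 1 := by
  rw [qm_eq ⟨zero_le_one, le_refl 1⟩]; exact F1

lemma qm_monoOn : MonotoneOn qm (Set.Icc (0:ℝ) 1) := by
  intro a ha b hb hab
  rw [qm_eq ha, qm_eq hb]
  exact Fmono (Subtype.mk_le_mk.mpr hab)

lemma qm_half : qm 2⁻¹ = 2⁻¹ := by
  have hm : (2⁻¹:ℝ) ∈ Set.Icc (0:ℝ) 1 := by constructor <;> norm_num
  rw [qm_eq hm, F_eq]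
  rw [if_pos (by norm_num : ((⟨2⁻¹, hm⟩ : XI) : ℝ) ≤ 2⁻¹)]
  rw [gL_half (by norm_num), F1]
  norm_num

lemma qm_eq1 : ∀ x ∈ Set.Icc (0:ℝ) 1, qm (x / (1 + x)) = qm x / 2 := by
  intro x hx
  have hx1 : (0:ℝ) < 1 + x := by linarith [hx.1]
  have hy0 : 0 ≤ x / (1 + x) := div_nonneg hx.1 hx1.le
  have hy2 : x / (1 + x) ≤ 2⁻¹ := by rw [div_le_iff₀ hx1]; linarith [hx.2]
  have hyI : x / (1 + x) ∈ Set.Icc (0:ℝ) 1 := ⟨hy0, by linarith⟩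
  rw [qm_eq hyI, qm_eq hx, F_eq]
  rw [if_pos (show ((⟨x/(1+x), hyI⟩ : XI) : ℝ) ≤ 2⁻¹ from hy2)]
  have hkey : gL ⟨x/(1+x), hyI⟩ = ⟨x, hx⟩ := by
    apply Subtype.ext
    show min (x/(1+x)) 2⁻¹ / (1 - min (x/(1+x)) 2⁻¹) = x
    rw [min_eq_left hy2]
    rw [div_eq_iff]
    · field_simp
      ring
    · intro h
      have : 1 - x/(1+x) = 1/(1+x) := by field_simp; ring
      rw [this] at h
      have := one_div_pos.mpr hx1
      linarith
  rw [hkey]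

lemma qm_sym_left : ∀ x, 0 ≤ x → x < 2⁻¹ → qm (1 - x) = 1 - qm x := by
  intro x h0 h2
  have hxI : x ∈ Set.Icc (0:ℝ) 1 := ⟨h0, by linarith⟩
  have hxI' : (1 - x) ∈ Set.Icc (0:ℝ) 1 := ⟨by linarith, by linarith⟩
  rw [qm_eq hxI', qm_eq hxI, F_eq ⟨1-x, hxI'⟩, F_eq ⟨x, hxI⟩]
  rw [if_neg (show ¬ (((⟨1-x, hxI'⟩ : XI) : ℝ) ≤ 2⁻¹) from by
    show ¬ (1 - x ≤ 2⁻¹); push_neg; linarith)]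
  rw [if_pos (show ((⟨x, hxI⟩ : XI) : ℝ) ≤ 2⁻¹ from h2.le)]
  have hkey : gR ⟨1-x, hxI'⟩ = gL ⟨x, hxI⟩ := by
    apply Subtype.ext
    show (1 - max (1-x) 2⁻¹) / max (1-x) 2⁻¹ = min x 2⁻¹ / (1 - min x 2⁻¹)
    rw [max_eq_left (by linarith), min_eq_left h2.le]
    congr 1 <;> ring
  rw [hkey]

lemma qm_sym : ∀ x ∈ Set.Icc (0:ℝ) 1, qm (1 - x) = 1 - qm x := by
  intro x hx
  rcases lt_trichotomy x 2⁻¹ with hlt | heq | hgt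
  · exact qm_sym_left x hx.1 hlt
  · subst heq
    rw [show (1:ℝ) - 2⁻¹ = 2⁻¹ by norm_num, qm_half]
    norm_num
  · have h := qm_sym_left (1 - x) (by linarith [hx.2]) (by linarith)
    rw [show (1:ℝ) - (1 - x) = x by ring] at h
    linarith

/-- Doubling property: it follows from the first functional equation. -/
lemma double_of (h : ℝ → ℝ) (e1 : ∀ x ∈ Set.Icc (0:ℝ) 1, h (x / (1 + x)) = h x / 2)
    {y : ℝ} (h0 : 0 ≤ y) (h2 : y ≤ 2⁻¹) : h (y / (1 - y)) = 2 * h y := by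
  have hd : (0:ℝ) < 1 - y := by linarith
  have hxI : y / (1 - y) ∈ Set.Icc (0:ℝ) 1 :=
    ⟨div_nonneg h0 hd.le, by rw [div_le_one hd]; linarith⟩
  have key := e1 _ hxI
  have heq : (y/(1-y)) / (1 + y/(1-y)) = y := by
    rw [show 1 + y/(1-y) = 1/(1-y) by field_simp; ring]
    rw [div_div_eq_mul_div, div_one, div_mul_cancel₀ y hd.ne']
  rw [heq] at key
  linarith

lemma lemA : ∀ n : ℕ, ∀ a : ℝ, 0 < a → a ≤ 1 → qm a = 0 → 1/a ≤ (n:ℝ) → False := by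
  intro n
  induction n with
  | zero =>
    intro a ha _ _ hle
    have : 0 < 1/a := by positivity
    norm_num at hle
    linarith
  | succ n ih =>
    intro a ha ha1 h0 hle
    rcases le_or_gt a 2⁻¹ with h2 | h2
    · have hd : (0:ℝ) < 1 - a := by linarith
      have key := double_of qm qm_eq1 ha.le h2
      apply ih (a/(1-a)) (by positivity) (by rw [div_le_one hd]; linarith)
        (by rw [key, h0]; ring)
      rw [one_div_div]
      have heq : (1-a)/a = 1/a - 1 := by field_simp
      rw [heq]
      push_cast at hle ⊢
      linarith
    · have hmem : a ∈ Set.Icc (0:ℝ) 1 := ⟨ha.le, ha1⟩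
      have hm2 : (2⁻¹:ℝ) ∈ Set.Icc (0:ℝ) 1 := by constructor <;> norm_num
      have := qm_monoOn hm2 hmem h2.le
      rw [qm_half, h0] at this
      norm_num at this

lemma double_pair {a b : ℝ} (ha : 0 ≤ a) (hab : a < b) (hb : b ≤ 2⁻¹) (he : qm a = qm b) :
    ∃ a' b', 0 ≤ a' ∧ a' < b' ∧ b' ≤ 1 ∧ qm a' = qm b' ∧ 1/(b'-a') ≤ 1/(b-a) - 1 := by
  have hda : (0:ℝ) < 1 - a := by linarith
  have hdb : (0:ℝ) < 1 - b := by linarith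
  refine ⟨a/(1-a), b/(1-b), div_nonneg ha hda.le, ?_, ?_, ?_, ?_⟩
  · rw [div_lt_div_iff₀ hda hdb]; nlinarith
  · rw [div_le_one hdb]; linarith
  · rw [double_of qm qm_eq1 ha (by linarith), double_of qm qm_eq1 (le_trans ha hab.le) hb, he]
  · have hgap : b/(1-b) - a/(1-a) = (b-a)/((1-a)*(1-b)) := by
      field_simp
      ring
    rw [hgap, one_div_div]
    have hba : b - a ≠ 0 := by intro hc; linarith [sub_pos.mpr hab]
    have h1 : 1/(b-a) - 1 = (1-(b-a))/(b-a) := by field_simp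
    rw [h1, div_le_div_iff₀ (by linarith) (by linarith)]
    nlinarith [mul_nonneg (mul_nonneg (sub_nonneg.mpr hab.le) ha)
      (by linarith : (0:ℝ) ≤ 2 - b)]

lemma lemB : ∀ n : ℕ, ∀ a b : ℝ, 0 ≤ a → a < b → b ≤ 1 → qm a = qm b →
    1/(b-a) ≤ (n:ℝ) → False := by
  intro n
  induction n with
  | zero =>
    intro a b _ hab _ _ hle
    have : 0 < 1/(b-a) := by
      apply one_div_pos.mpr; linarith
    norm_num at hle
    linarith
  | succ n ih =>
    intro a b ha hab hb1 he hle
    rcases le_or_gt b 2⁻¹ with hb2 | hb2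
    · obtain ⟨a', b', h1, h2, h3, h4, h5⟩ := double_pair ha hab hb2 he
      exact ih a' b' h1 h2 h3 h4 (by push_cast at hle ⊢; linarith)
    rcases le_or_gt 2⁻¹ a with ha2 | ha2
    · have haI : a ∈ Set.Icc (0:ℝ) 1 := ⟨ha, by linarith⟩
      have hbI : b ∈ Set.Icc (0:ℝ) 1 := ⟨by linarith, hb1⟩
      have he2 : qm (1-b) = qm (1-a) := by
        rw [qm_sym a haI, qm_sym b hbI, he]
      obtain ⟨a', b', h1, h2, h3, h4, h5⟩ :=
        double_pair (a := 1-b) (b := 1-a) (by linarith) (by linarith) (by linarith) he2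
      refine ih a' b' h1 h2 h3 h4 ?_
      rw [show (1-a)-(1-b) = b - a by ring] at h5
      push_cast at hle ⊢
      linarith
    · -- straddle : a < 1/2 < b
      have haI : a ∈ Set.Icc (0:ℝ) 1 := ⟨ha, by linarith⟩
      have hbI : b ∈ Set.Icc (0:ℝ) 1 := ⟨by linarith, hb1⟩
      have hm2 : (2⁻¹:ℝ) ∈ Set.Icc (0:ℝ) 1 := by constructor <;> norm_num
      have h1 : qm a ≤ qm 2⁻¹ := qm_monoOn haI hm2 (by linarith)
      have h2 : qm 2⁻¹ ≤ qm b := qm_monoOn hm2 hbI (by linarith)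
      have hqa : qm a = 2⁻¹ := by rw [qm_half] at h1 h2; linarith
      have hkey := double_of qm qm_eq1 ha ha2.le
      have hda : (0:ℝ) < 1 - a := by linarith
      have haa : a/(1-a) < 1 := by rw [div_lt_one hda]; linarith
      have haaI : a/(1-a) ∈ Set.Icc (0:ℝ) 1 := ⟨div_nonneg ha hda.le, haa.le⟩
      have ht0 : 0 < 1 - a/(1-a) := by linarith
      have ht1 : 1 - a/(1-a) ≤ 1 := by linarith [haaI.1]
      have hqt : qm (1 - a/(1-a)) = 0 := by
        rw [qm_sym _ haaI, hkey, hqa]; norm_num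
      exact lemA ⌈1/(1 - a/(1-a))⌉₊ _ ht0 ht1 hqt (Nat.le_ceil _)

lemma qm_strict : StrictMonoOn qm (Set.Icc (0:ℝ) 1) := by
  intro a ha b hb hab
  refine lt_of_le_of_ne (qm_monoOn ha hb hab.le) fun he => ?_
  exact lemB ⌈1/(b-a)⌉₊ a b ha.1 hab hb.2 he (Nat.le_ceil _)

lemma qm_is : IsMinkowskiQuestionMark qm := by
  have h0I : (0:ℝ) ∈ Set.Icc (0:ℝ) 1 := ⟨le_refl 0, zero_le_one⟩
  have h1I : (1:ℝ) ∈ Set.Icc (0:ℝ) 1 := ⟨zero_le_one, le_refl 1⟩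
  refine ⟨qm_strict, qm_cont.continuousOn, ⟨?_, qm_strict.injOn, ?_⟩, qm_eq1, qm_sym⟩
  · intro x hx
    constructor
    · rw [← qm0]; exact qm_monoOn h0I hx hx.1
    · rw [← qm1]; exact qm_monoOn hx h1I hx.2
  · intro y hy
    have h := intermediate_value_Icc zero_le_one qm_cont.continuousOn
    rw [qm0, qm1] at h
    exact h hy

end MQAux

lemma mq_conjugates (h : ℝ → ℝ) (H : IsMinkowskiQuestionMark h) :
    ∀ x ∈ Set.Icc (0:ℝ) 1, h (fareyMap x) = tentMap (h x) := by
  obtain ⟨hsm, hc, hbij, e1, e2⟩ := H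
  have hmono := hsm.monotoneOn
  have hm2 : (2⁻¹:ℝ) ∈ Set.Icc (0:ℝ) 1 := by constructor <;> norm_num
  have h0 : h 0 = 0 := by
    have := e1 0 (by norm_num)
    norm_num at this
    linarith
  have h1 : h 1 = 1 := by
    have := e2 0 (by norm_num)
    norm_num at this
    linarith
  have hhalf : h 2⁻¹ = 2⁻¹ := by
    have := e2 2⁻¹ (by norm_num)
    norm_num at this
    linarith
  intro y hy
  rcases le_or_gt y 2⁻¹ with h2 | h2
  · have hΦ : fareyMap y = y/(1-y) := by
      rcases eq_or_lt_of_le hy.1 with h0y | h0y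
      · rw [← h0y]
        unfold fareyMap
        norm_num
      · apply min_eq_left
        rw [div_le_div_iff₀ (by linarith) h0y]
        nlinarith
    rw [hΦ, MQAux.double_of h e1 hy.1 h2]
    have hle : h y ≤ 2⁻¹ := by
      have := hmono hy hm2 h2
      linarith
    unfold tentMap
    rw [min_eq_left (by linarith)]
  · rcases eq_or_lt_of_le hy.2 with h1y | h1y
    · subst h1y
      unfold fareyMap tentMap
      norm_num [h0, h1]
    · have hΦ : fareyMap y = (1-y)/y := by
        apply min_eq_right
        rw [div_le_div_iff₀ (by linarith) (by linarith)]
        nlinarith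
      have hz2 : 1 - y ≤ 2⁻¹ := by linarith
      have hz0 : 0 ≤ 1 - y := by linarith
      have hzz : (1-y)/(1-(1-y)) = (1-y)/y := by norm_num
      rw [hΦ, ← hzz, MQAux.double_of h e1 hz0 hz2]
      have hzy : h (1-y) = 1 - h y := e2 y hy
      have hge : 2⁻¹ ≤ h y := by
        have := hmono hm2 hy h2.le
        linarith
      unfold tentMap
      rw [min_eq_right (by linarith), hzy]
      ring

/-- There exists a Minkowski question mark homeomorphism, and every such function
conjugates the Farey map to the tent map on `[0,1]`. -/
theorem minkowski_exists_and_conjugates :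
    (∃ h : ℝ → ℝ, IsMinkowskiQuestionMark h) ∧
    ∀ h : ℝ → ℝ, IsMinkowskiQuestionMark h →
      ∀ x ∈ Set.Icc (0 : ℝ) 1, h (fareyMap x) = tentMap (h x) := by
  exact ⟨⟨MQAux.qm, MQAux.qm_is⟩, mq_conjugates⟩
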